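/- Assume the Setup. If there exists some j ∈ {1, …, n−2} such that 𝐇_j contains a rainbow Hamiltonian cycle (a rainbow cycle through all n−3 vertices of V ∖ {x, y, z}), then for every integer k with 4 ≤ k ≤ n−1 there exists a rainbow k-path joining x and y in 𝐆. -/

import Mathlib

set_option autoImplicit false

/-- `IsRainbowPathOn G D S k x y`: in the graph collection `G` (with relevant
indices `D`), there is a rainbow path on `k` vertices from `x` to `y`, all of
whose vertices lie in `S`: the vertices are `u 0, u 1, …, u (k-1)`, pairwise
distinct, and the edges get pairwise distinct colors `c 0, …, c (k-2)` from `D`,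
the `i`-th edge lying in the graph `G (c i)`. -/
def IsRainbowPathOn {V : Type*} (G : ℕ → SimpleGraph V) (D : Finset ℕ)
    (S : Set V) (k : ℕ) (x y : V) : Prop :=
  ∃ (u : ℕ → V) (c : ℕ → ℕ),
    (∀ i, i < k → u i ∈ S) ∧
    (∀ i j, i < k → j < k → u i = u j → i = j) ∧
    (∀ i, i + 1 < k → c i ∈ D) ∧
    (∀ i j, i + 1 < k → j + 1 < k → c i = c j → i = j) ∧
    0 < k ∧ u 0 = x ∧ u (k - 1) = y ∧
    (∀ i, i + 1 < k → (G (c i)).Adj (u i) (u (i + 1)))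

/-- The number of edges of a shortest rainbow path between `x` and `y`. -/
noncomputable def rainbowDist {V : Type*} (G : ℕ → SimpleGraph V) (D : Finset ℕ)
    (x y : V) : ℕ :=
  sInf {d : ℕ | IsRainbowPathOn G D Set.univ (d + 1) x y}

/-- The collection `G` (indices `D`) on the finite vertex type `V` is rainbow
panconnected: for every pair of distinct vertices `x, y` and every
`k` with `rainbowDist x y + 1 ≤ k ≤ |V|` there is a rainbow `k`-path
joining `x` and `y`. -/
def RainbowPanconnected {V : Type*} [Fintype V] (G : ℕ → SimpleGraph V)
    (D : Finset ℕ) : Prop :=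
  ∀ x y : V, x ≠ y → ∀ k : ℕ,
    rainbowDist G D x y + 1 ≤ k → k ≤ Fintype.card V →
    IsRainbowPathOn G D Set.univ k x y

/-- `IsFCollection n m G`: the graphs `G 1, …, G m` (on an `n`-vertex set, `n` odd)
all equal `Q₁ ∨ Q₂` where `Q₁` is an empty graph on `(n-1)/2` vertices and `Q₂` is a
graph on the remaining `(n+1)/2` vertices with minimum degree at least `1` having
a connected component which is a single edge. -/
def IsFCollection {V : Type*} (n m : ℕ) (G : ℕ → SimpleGraph V) : Prop :=
  ∃ (S : Set V) (G0 : SimpleGraph V),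
    2 * S.ncard = n - 1 ∧ 2 * Sᶜ.ncard = n + 1 ∧
    (∀ i ∈ Finset.Icc 1 m, G i = G0) ∧
    (∀ a ∈ S, ∀ b ∈ S, ¬ G0.Adj a b) ∧
    (∀ a ∈ S, ∀ b ∈ Sᶜ, G0.Adj a b) ∧
    (∀ a ∈ Sᶜ, ∃ b ∈ Sᶜ, G0.Adj a b) ∧
    (∃ a ∈ Sᶜ, ∃ b ∈ Sᶜ, G0.Adj a b ∧
      (∀ v ∈ Sᶜ, G0.Adj a v → v = b) ∧ (∀ v ∈ Sᶜ, G0.Adj b v → v = a))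

/-- A rainbow cycle on `l` vertices, all lying in `S`, in the collection `G`
with color set `D`. -/
def HasRainbowCycleOn {V : Type*} (G : ℕ → SimpleGraph V) (D : Finset ℕ)
    (S : Set V) (l : ℕ) : Prop :=
  ∃ (u : ℕ → V) (c : ℕ → ℕ),
    (∀ i, i < l → u i ∈ S) ∧
    (∀ i j, i < l → j < l → u i = u j → i = j) ∧
    (∀ i, i < l → c i ∈ D) ∧
    (∀ i j, i < l → j < l → c i = c j → i = j) ∧
    3 ≤ l ∧
    (∀ i, i < l → (G (c i)).Adj (u i) (u ((i + 1) % l)))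

/-- A rainbow Hamiltonian cycle on the set `S` (of `l` vertices) in the
collection `G` with color set `D`: a rainbow cycle passing through every
vertex of `S`. -/
def HasRainbowHamCycleOn {V : Type*} (G : ℕ → SimpleGraph V) (D : Finset ℕ)
    (S : Set V) (l : ℕ) : Prop :=
  ∃ (u : ℕ → V) (c : ℕ → ℕ),
    (∀ i j, i < l → j < l → u i = u j → i = j) ∧
    (∀ v : V, v ∈ S ↔ ∃ i, i < l ∧ u i = v) ∧
    (∀ i, i < l → c i ∈ D) ∧
    (∀ i j, i < l → j < l → c i = c j → i = j) ∧
    3 ≤ l ∧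
    (∀ i, i < l → (G (c i)).Adj (u i) (u ((i + 1) % l)))

/-- A rainbow Hamiltonian path on the set `S` (of `l` vertices) in the
collection `G` with color set `D`: a rainbow path passing through every
vertex of `S`. -/
def HasRainbowHamPathOn {V : Type*} (G : ℕ → SimpleGraph V) (D : Finset ℕ)
    (S : Set V) (l : ℕ) : Prop :=
  ∃ (u : ℕ → V) (c : ℕ → ℕ),
    (∀ i j, i < l → j < l → u i = u j → i = j) ∧
    (∀ v : V, v ∈ S ↔ ∃ i, i < l ∧ u i = v) ∧
    (∀ i, i + 1 < l → c i ∈ D) ∧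
    (∀ i j, i + 1 < l → j + 1 < l → c i = c j → i = j) ∧
    0 < l ∧
    (∀ i, i + 1 < l → (G (c i)).Adj (u i) (u (i + 1)))

/-- Lemma: Hamiltonian cycle in some `𝐇_j`. Under the Setup, if
for some `j ∈ {1,…,n-2}` the collection `𝐇_j` (graphs `H i = G i - {x,y,z}` for
`i ∈ {1,…,n-2} \ {j}`) contains a rainbow Hamiltonian cycle on the `n-3` vertices
of `V \ {x,y,z}`, then for every `k` with `4 ≤ k ≤ n-1` there is a rainbow
`k`-path joining `x` and `y` in `𝐆`. -/
theorem statement3 {V : Type*} [Fintype V] (n : ℕ) (hn : 7 ≤ n) (hodd : Odd n)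
    (hV : Fintype.card V = n) (G : ℕ → SimpleGraph V)
    (hdeg : ∀ i ∈ Finset.Icc 1 (n - 1), ∀ v : V,
      n + 1 ≤ 2 * ((G i).neighborSet v).ncard)
    (x y z : V) (hxy : x ≠ y) (hzx : z ≠ x) (hzy : z ≠ y)
    (hxz : ¬ (G (n - 1)).Adj x z)
    (hham : ∃ j ∈ Finset.Icc 1 (n - 2),
      HasRainbowHamCycleOn G (Finset.Icc 1 (n - 2) \ {j})
        (({x, y, z} : Set V)ᶜ) (n - 3)) :
    ∀ k : ℕ, 4 ≤ k → k ≤ n - 1 →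
      IsRainbowPathOn G (Finset.Icc 1 (n - 1)) Set.univ k x y := by
  classical
  intro k hk4 hkn
  obtain ⟨j, hj, u, c, uinj, usurj, cmem, cinj, hl3, hadj⟩ := hham
  obtain ⟨m, hm⟩ := hodd
  rw [Finset.mem_Icc] at hj
  set l := n - 3 with hldef
  have hm3 : 3 ≤ m := by omega
  have hlpos : 0 < l := by omega
  have hl4 : 4 ≤ l := by omega
  set t := k - 3 with htdef
  have ht1 : 1 ≤ t := by omega
  have htl : t < l := by omega
  -- cycle vertices avoid x, y, z
  have humem : ∀ i, i < l → u i ≠ x ∧ u i ≠ y ∧ u i ≠ z := by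
    intro i hi
    have h := (usurj (u i)).2 ⟨i, hi, rfl⟩
    simp only [Set.mem_compl_iff, Set.mem_insert_iff, Set.mem_singleton_iff, not_or] at h
    exact h
  have hc : ∀ i, i < l → 1 ≤ c i ∧ c i ≤ n - 2 ∧ c i ≠ j := by
    intro i hi
    have h := cmem i hi
    simp only [Finset.mem_sdiff, Finset.mem_Icc, Finset.mem_singleton] at h
    tauto
  have hidx : ∀ v : V, v ≠ x → v ≠ y → v ≠ z → ∃ i, i < l ∧ u i = v := by
    intro v h1 h2 h3
    exact (usurj v).1 (by simp [Set.mem_compl_iff, h1, h2, h3])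
  set f : V → ℕ := fun v => if h : ∃ i, i < l ∧ u i = v then h.choose else 0 with hfdef
  have hf : ∀ v : V, v ≠ x → v ≠ y → v ≠ z → f v < l ∧ u (f v) = v := by
    intro v h1 h2 h3
    have hex := hidx v h1 h2 h3
    simp only [hfdef, dif_pos hex]
    exact ⟨hex.choose_spec.1, hex.choose_spec.2⟩
  -- generic counting lemma
  have hAcard : ∀ (G0 : SimpleGraph V) (w : V) (E : Finset V),
      (n + 1 ≤ 2 * (G0.neighborSet w).ncard) →
      (∀ v, G0.Adj w v → v ∈ E ∨ (v ≠ x ∧ v ≠ y ∧ v ≠ z)) →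
      m + 1 ≤ ((Finset.range l).filter (fun b => G0.Adj w (u b))).card + E.card := by
    intro G0 w E hdeg0 hE
    have h1 : (G0.neighborSet w).ncard
        = (Finset.univ.filter (fun v => G0.Adj w v)).card := by
      rw [← Set.ncard_coe_finset]
      congr 1
      ext v
      simp [SimpleGraph.mem_neighborSet]
    have h2 : (Finset.univ.filter (fun v => G0.Adj w v)) ⊆
        (Finset.univ.filter (fun v => G0.Adj w v ∧ v ≠ x ∧ v ≠ y ∧ v ≠ z)) ∪ E := by
      intro v hv
      simp only [Finset.mem_filter, Finset.mem_univ, true_and] at hv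
      rcases hE v hv with h | h
      · exact Finset.mem_union_right _ h
      · exact Finset.mem_union_left _ (by
          simp only [Finset.mem_filter, Finset.mem_univ, true_and]
          exact ⟨hv, h⟩)
    have h3 := le_trans (Finset.card_le_card h2) (Finset.card_union_le _ _)
    have h4 : (Finset.univ.filter (fun v => G0.Adj w v ∧ v ≠ x ∧ v ≠ y ∧ v ≠ z)).card
        ≤ ((Finset.range l).filter (fun b => G0.Adj w (u b))).card := by
      apply Finset.card_le_card_of_injOn f
      · intro v hv
        simp only [Finset.mem_coe, Finset.mem_filter, Finset.mem_univ, true_and] at hv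
        obtain ⟨hadjv, e1, e2, e3⟩ := hv
        obtain ⟨hfl, hfu⟩ := hf v e1 e2 e3
        simp only [Finset.mem_coe, Finset.mem_filter, Finset.mem_range]
        exact ⟨hfl, by rw [hfu]; exact hadjv⟩
      · intro v hv w' hw' hvw
        have hv' := Finset.mem_coe.mp hv
        have hw'' := Finset.mem_coe.mp hw'
        simp only [Finset.mem_filter, Finset.mem_univ, true_and] at hv' hw''
        obtain ⟨_, e1, e2, e3⟩ := hv'
        obtain ⟨_, d1, d2, d3⟩ := hw''
        have q1 := (hf v e1 e2 e3).2
        have q2 := (hf w' d1 d2 d3).2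
        rw [← q1, ← q2, hvw]
    rw [h1] at hdeg0
    omega
  -- the sets A, B, C
  set A := (Finset.range l).filter (fun b => (G (n-1)).Adj x (u b)) with hAdef
  set B := (Finset.range l).filter (fun b => (G j).Adj y (u b)) with hBdef
  set C := (Finset.range l).filter (fun b => (G j).Adj y (u ((b + t) % l))) with hCdef
  have hA : m ≤ A.card := by
    have h := hAcard (G (n-1)) x {y}
      (hdeg (n-1) (by rw [Finset.mem_Icc]; omega) x)
      (by
        intro v hv
        by_cases hvy : v = y
        · exact Or.inl (by simp [hvy])
        · refine Or.inr ⟨fun h => ?_, hvy, fun h => ?_⟩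
          · rw [h] at hv; exact (G (n-1)).irrefl hv
          · rw [h] at hv; exact hxz hv)
    rw [← hAdef] at h
    simp only [Finset.card_singleton] at h
    omega
  have hB : m - 1 ≤ B.card := by
    have hcard2 : ({x, z} : Finset V).card ≤ 2 := by
      apply le_trans (Finset.card_insert_le _ _); simp
    have h := hAcard (G j) y ({x, z} : Finset V)
      (hdeg j (by rw [Finset.mem_Icc]; omega) y)
      (by
        intro v hv
        by_cases hvx : v = x
        · exact Or.inl (by simp [hvx])
        · by_cases hvz : v = z
          · exact Or.inl (by simp [hvz])
          · refine Or.inr ⟨hvx, fun h => ?_, hvz⟩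
            rw [h] at hv; exact (G j).irrefl hv)
    rw [← hBdef] at h
    omega
  have hshift : ∀ b, b < l → ((b + l - t) % l + t) % l = b := by
    intro b hb
    rw [Nat.mod_add_mod]
    have e : b + l - t + t = b + l := by omega
    rw [e, Nat.add_mod_right, Nat.mod_eq_of_lt hb]
  have hCB : B.card ≤ C.card := by
    apply Finset.card_le_card_of_injOn (fun b => (b + l - t) % l)
    · intro b hb
      simp only [hBdef, hCdef, Finset.mem_coe, Finset.mem_filter, Finset.mem_range] at hb ⊢
      refine ⟨Nat.mod_lt _ hlpos, ?_⟩
      rw [hshift b hb.1]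
      exact hb.2
    · intro b1 hb1 b2 hb2 he
      have hb1' := Finset.mem_coe.mp hb1
      have hb2' := Finset.mem_coe.mp hb2
      simp only [hBdef, Finset.mem_filter, Finset.mem_range] at hb1' hb2'
      have e1 := hshift b1 hb1'.1
      have e2 := hshift b2 hb2'.1
      have he' : (b1 + l - t) % l = (b2 + l - t) % l := he
      rw [← e1, ← e2, he']
  have hACsub : A ∪ C ⊆ Finset.range l := by
    apply Finset.union_subset <;> exact Finset.filter_subset _ _
  have hunion : (A ∪ C).card ≤ l := by
    have := Finset.card_le_card hACsub
    simpa using this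
  have hinter : 1 ≤ (A ∩ C).card := by
    have h := Finset.card_union_add_card_inter A C
    omega
  obtain ⟨a, ha⟩ := Finset.card_pos.mp (show 0 < (A ∩ C).card by omega)
  rw [Finset.mem_inter] at ha
  have haA := ha.1
  have haC := ha.2
  simp only [hAdef, hCdef, Finset.mem_filter, Finset.mem_range] at haA haC
  have hal : a < l := haA.1
  have haxadj : (G (n-1)).Adj x (u a) := haA.2
  have hayadj : (G j).Adj y (u ((a + t) % l)) := haC.2
  -- mod injectivity
  have modinj : ∀ d e, d < l → e < l → (a + d) % l = (a + e) % l → d = e := by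
    intro d e hd he h
    have h2 : d ≡ e [MOD l] := Nat.ModEq.add_left_cancel' a h
    rw [Nat.ModEq, Nat.mod_eq_of_lt hd, Nat.mod_eq_of_lt he] at h2
    exact h2
  have hmodlt : ∀ b : ℕ, b % l < l := fun b => Nat.mod_lt _ hlpos
  refine ⟨fun i => if i = 0 then x else if i = k - 1 then y else u ((a + i - 1) % l),
    fun i => if i = 0 then n - 1 else if i = k - 2 then j else c ((a + i - 1) % l),
    fun i _ => Set.mem_univ _, ?_, ?_, ?_, by omega, by simp, ?_, ?_⟩
  · -- vertex injectivity
    intro i i' hi hi' heq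
    simp only [] at heq
    have h3 : i = 0 ∨ i = k - 1 ∨ (1 ≤ i ∧ i ≤ k - 2) := by omega
    have h3' : i' = 0 ∨ i' = k - 1 ∨ (1 ≤ i' ∧ i' ≤ k - 2) := by omega
    rcases h3 with rfl | hik | hmid <;> rcases h3' with rfl | hik' | hmid'
    · rfl
    · rw [if_pos rfl, if_neg (by omega : ¬(i' = 0)), hik', if_pos rfl] at heq
      exact absurd heq hxy
    · rw [if_pos rfl, if_neg (by omega : ¬(i' = 0)),
        if_neg (by omega : ¬(i' = k - 1))] at heq
      exact absurd heq.symm (humem _ (hmodlt _)).1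
    · rw [if_neg (by omega : ¬(i = 0)), hik, if_pos rfl, if_pos rfl] at heq
      exact absurd heq.symm hxy
    · omega
    · rw [if_neg (by omega : ¬(i = 0)), hik, if_pos rfl, if_neg (by omega : ¬(i' = 0)),
        if_neg (by omega : ¬(i' = k - 1))] at heq
      exact absurd heq.symm (humem _ (hmodlt _)).2.1
    · rw [if_neg (by omega : ¬(i = 0)), if_neg (by omega : ¬(i = k - 1)), if_pos rfl] at heq
      exact absurd heq (humem _ (hmodlt _)).1
    · rw [if_neg (by omega : ¬(i = 0)), if_neg (by omega : ¬(i = k - 1)),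
        if_neg (by omega : ¬(i' = 0)), hik', if_pos rfl] at heq
      exact absurd heq (humem _ (hmodlt _)).2.1
    · rw [if_neg (by omega : ¬(i = 0)), if_neg (by omega : ¬(i = k - 1)),
        if_neg (by omega : ¬(i' = 0)), if_neg (by omega : ¬(i' = k - 1))] at heq
      have hb := uinj _ _ (hmodlt (a + i - 1)) (hmodlt (a + i' - 1)) heq
      have e1 : a + i - 1 = a + (i - 1) := by omega
      have e2 : a + i' - 1 = a + (i' - 1) := by omega
      rw [e1, e2] at hb
      have := modinj (i - 1) (i' - 1) (by omega) (by omega) hb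
      omega
  · -- color membership
    intro i hi
    simp only []
    have h3 : i = 0 ∨ i = k - 2 ∨ (1 ≤ i ∧ i ≤ k - 3) := by omega
    rcases h3 with rfl | hik | hmid
    · rw [if_pos rfl, Finset.mem_Icc]; omega
    · rw [if_neg (by omega : ¬(i = 0)), hik, if_pos rfl, Finset.mem_Icc]; omega
    · rw [if_neg (by omega : ¬(i = 0)), if_neg (by omega : ¬(i = k - 2)), Finset.mem_Icc]
      have := hc _ (hmodlt (a + i - 1))
      omega
  · -- color injectivity
    intro i i' hi hi' heq
    simp only [] at heq
    have h3 : i = 0 ∨ i = k - 2 ∨ (1 ≤ i ∧ i ≤ k - 3) := by omega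
    have h3' : i' = 0 ∨ i' = k - 2 ∨ (1 ≤ i' ∧ i' ≤ k - 3) := by omega
    rcases h3 with rfl | hik | hmid <;> rcases h3' with rfl | hik' | hmid'
    · rfl
    · rw [if_pos rfl, if_neg (by omega : ¬(i' = 0)), hik', if_pos rfl] at heq
      omega
    · rw [if_pos rfl, if_neg (by omega : ¬(i' = 0)), if_neg (by omega : ¬(i' = k - 2))] at heq
      have := hc _ (hmodlt (a + i' - 1))
      omega
    · rw [if_neg (by omega : ¬(i = 0)), hik, if_pos rfl, if_pos rfl] at heq
      omega
    · omega
    · rw [if_neg (by omega : ¬(i = 0)), hik, if_pos rfl, if_neg (by omega : ¬(i' = 0)),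
        if_neg (by omega : ¬(i' = k - 2))] at heq
      exact absurd heq.symm (hc _ (hmodlt (a + i' - 1))).2.2
    · rw [if_neg (by omega : ¬(i = 0)), if_neg (by omega : ¬(i = k - 2)), if_pos rfl] at heq
      have := hc _ (hmodlt (a + i - 1))
      omega
    · rw [if_neg (by omega : ¬(i = 0)), if_neg (by omega : ¬(i = k - 2)),
        if_neg (by omega : ¬(i' = 0)), hik', if_pos rfl] at heq
      exact absurd heq (hc _ (hmodlt (a + i - 1))).2.2
    · rw [if_neg (by omega : ¬(i = 0)), if_neg (by omega : ¬(i = k - 2)),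
        if_neg (by omega : ¬(i' = 0)), if_neg (by omega : ¬(i' = k - 2))] at heq
      have hb := cinj _ _ (hmodlt (a + i - 1)) (hmodlt (a + i' - 1)) heq
      have e1 : a + i - 1 = a + (i - 1) := by omega
      have e2 : a + i' - 1 = a + (i' - 1) := by omega
      rw [e1, e2] at hb
      have := modinj (i - 1) (i' - 1) (by omega) (by omega) hb
      omega
  · -- end vertex
    have hne : ¬(k - 1 = 0) := by omega
    simp [hne]
  · -- adjacency
    intro i hi
    simp only []
    have h3 : i = 0 ∨ i = k - 2 ∨ (1 ≤ i ∧ i ≤ k - 3) := by omega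
    rcases h3 with rfl | hik | hmid
    · rw [if_pos rfl, if_pos rfl, if_neg (by omega : ¬(0 + 1 = 0)),
        if_neg (by omega : ¬(0 + 1 = k - 1))]
      have e : a + (0 + 1) - 1 = a := by omega
      rw [e, Nat.mod_eq_of_lt hal]
      exact haxadj
    · rw [if_neg (by omega : ¬(i = 0)), hik, if_pos rfl,
        if_neg (by omega : ¬(k - 2 = 0)), if_neg (by omega : ¬(k - 2 = k - 1)),
        if_neg (by omega : ¬(k - 2 + 1 = 0)), if_pos (by omega : k - 2 + 1 = k - 1)]
      have e : a + (k - 2) - 1 = a + t := by omega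
      rw [e]
      exact hayadj.symm
    · rw [if_neg (by omega : ¬(i = 0)), if_neg (by omega : ¬(i = k - 2)),
        if_neg (by omega : ¬(i = k - 1)),
        if_neg (by omega : ¬(i + 1 = 0)), if_neg (by omega : ¬(i + 1 = k - 1)),
        if_neg (by omega : ¬(i = 0))]
      have hadjb := hadj ((a + i - 1) % l) (hmodlt _)
      have e1 : (a + i - 1) % l + 1 = (a + i - 1) % l + 1 := rfl
      have e2 : ((a + i - 1) % l + 1) % l = (a + (i + 1) - 1) % l := by
        rw [Nat.mod_add_mod]
        congr 1
        omega
      rw [e2] at hadjb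
      exact hadjb
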